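/- If a finite group G is a central product of A and B, then m*(G)·|A ∩ B|² = m*(A)·m*(B). -/
import Mathlib


open scoped Pointwise

/-- Relative Chermak–Delgado measure `m_W(K) = |K| * |C_W(K)|`. -/
noncomputable def m {G : Type*} [Group G] (W K : Subgroup G) : ℕ :=
  Nat.card K * Nat.card (W ⊓ Subgroup.centralizer (K : Set G) : Subgroup G)

/-- The Chermak–Delgado lattice of `W`: subgroups of `W` maximizing `m W`. -/
def CD {G : Type*} [Group G] (W : Subgroup G) : Set (Subgroup G) :=
  {K | K ≤ W ∧ ∀ L ≤ W, m W L ≤ m W K}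

/-- `m*(W)`, the maximal Chermak–Delgado measure over subgroups of `W`. -/
noncomputable def mstar {G : Type*} [Group G] (W : Subgroup G) : ℕ :=
  ⨆ K : {K : Subgroup G // K ≤ W}, m W K

set_option linter.unusedSectionVars false

namespace CPaux

open Subgroup

variable {G : Type*} [Group G]

theorem centralizer_sup' (S T : Subgroup G) :
    centralizer ((S ⊔ T : Subgroup G) : Set G) =
      centralizer (S : Set G) ⊓ centralizer (T : Set G) := by
  refine le_antisymm (le_inf (centralizer_le ?_) (centralizer_le ?_)) ?_
  · exact SetLike.coe_subset_coe.mpr le_sup_left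
  · exact SetLike.coe_subset_coe.mpr le_sup_right
  · rintro g ⟨hg1, hg2⟩
    rw [mem_centralizer_iff]
    intro h hh
    have hh' : h ∈ Subgroup.closure ((S : Set G) ∪ (T : Set G)) := by
      rw [Subgroup.closure_union, closure_eq, closure_eq]
      exact hh
    refine closure_induction (p := fun x _ => Commute x g) (fun x hx => ?_)
      (Commute.one_left g) (fun x y _ _ hx hy => Commute.mul_left hx hy)
      (fun x _ hx => Commute.inv_left hx) hh'
    rcases hx with h' | h'
    · exact mem_centralizer_iff.mp hg1 x h'
    · exact mem_centralizer_iff.mp hg2 x h'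

theorem setMulCard [Finite G] (S T : Subgroup G) :
    Nat.card ((S : Set G) * (T : Set G)) * Nat.card ↥(S ⊓ T) =
      Nat.card S * Nat.card T := by
  have hrep : ∀ g : ((S : Set G) * (T : Set G) : Set G),
      ∃ p : G × G, p.1 ∈ S ∧ p.2 ∈ T ∧ p.1 * p.2 = (g : G) := by
    rintro ⟨g, hg⟩
    rw [Set.mem_mul] at hg
    obtain ⟨x, hx, y, hy, h⟩ := hg
    exact ⟨(x, y), hx, hy, h⟩
  choose σ hσS hσT hστ using hrep
  have e : ((S : Set G) * (T : Set G) : Set G) × ↥(S ⊓ T) ≃ ↥S × ↥T := by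
    refine
      { toFun := fun q => (⟨(σ q.1).1 * q.2, mul_mem (hσS q.1) (mem_inf.mp q.2.2).1⟩,
          ⟨(q.2 : G)⁻¹ * (σ q.1).2, mul_mem (inv_mem (mem_inf.mp q.2.2).2) (hσT q.1)⟩)
        invFun := fun p =>
          (⟨(p.1 : G) * p.2, Set.mul_mem_mul p.1.2 p.2.2⟩,
           ⟨(σ ⟨(p.1 : G) * p.2, Set.mul_mem_mul p.1.2 p.2.2⟩).1⁻¹ * p.1, mem_inf.mpr ⟨?_, ?_⟩⟩)
        left_inv := ?_
        right_inv := ?_ }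
    · exact mul_mem (inv_mem (hσS _)) p.1.2
    · set g : ((S : Set G) * (T : Set G) : Set G) :=
        ⟨(p.1 : G) * p.2, Set.mul_mem_mul p.1.2 p.2.2⟩ with hgdef
      have h : (σ g).1 * (σ g).2 = (p.1 : G) * p.2 := hστ g
      have hs : (p.1 : G) = (σ g).1 * (σ g).2 * (p.2 : G)⁻¹ :=
        eq_mul_inv_iff_mul_eq.mpr h.symm
      have key : (σ g).1⁻¹ * (p.1 : G) = (σ g).2 * (p.2 : G)⁻¹ := by
        rw [hs]; group
      rw [key]
      exact mul_mem (hσT _) (inv_mem p.2.2)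
    · rintro ⟨g, d⟩
      have h : (σ g).1 * (σ g).2 = (g : G) := hστ g
      refine Prod.ext (Subtype.ext ?_) (Subtype.ext ?_)
      · show ((σ g).1 * d) * ((d : G)⁻¹ * (σ g).2) = (g : G)
        rw [← h]; group
      · have hval : ((σ g).1 * (d : G)) * ((d : G)⁻¹ * (σ g).2) = (g : G) := by
          rw [← h]; group
        have hg' : (⟨((σ g).1 * (d : G)) * ((d : G)⁻¹ * (σ g).2),
            Set.mul_mem_mul (mul_mem (hσS g) (mem_inf.mp d.2).1)
              (mul_mem (inv_mem (mem_inf.mp d.2).2) (hσT g))⟩ :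
            ((S : Set G) * (T : Set G) : Set G)) = g := Subtype.ext hval
        show (σ _).1⁻¹ * ((σ g).1 * (d : G)) = (d : G)
        rw [hg']
        group
    · rintro ⟨s, t⟩
      set g : ((S : Set G) * (T : Set G) : Set G) :=
        ⟨(s : G) * t, Set.mul_mem_mul s.2 t.2⟩ with hgdef
      have h : (σ g).1 * (σ g).2 = (s : G) * t := hστ g
      refine Prod.ext (Subtype.ext ?_) (Subtype.ext ?_)
      · show (σ g).1 * ((σ g).1⁻¹ * (s : G)) = (s : G)
        group
      · show ((σ g).1⁻¹ * (s : G))⁻¹ * (σ g).2 = (t : G)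
        calc ((σ g).1⁻¹ * (s : G))⁻¹ * (σ g).2
            = (s : G)⁻¹ * ((σ g).1 * (σ g).2) := by group
          _ = (s : G)⁻¹ * ((s : G) * t) := by rw [h]
          _ = (t : G) := by group
  have := Nat.card_congr e
  rw [Nat.card_prod, Nat.card_prod] at this
  exact this

theorem coe_sup_of_comm (X Y : Subgroup G)
    (h : ∀ x ∈ X, ∀ y ∈ Y, x * y = y * x) :
    ((X ⊔ Y : Subgroup G) : Set G) = (X : Set G) * (Y : Set G) := by
  have hsub : (X : Set G) * (Y : Set G) ⊆ ((X ⊔ Y : Subgroup G) : Set G) := by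
    rintro g hg
    rw [Set.mem_mul] at hg
    obtain ⟨x, hx, y, hy, rfl⟩ := hg
    exact mul_mem_sup hx hy
  refine Set.Subset.antisymm ?_ hsub
  let K : Subgroup G :=
    { carrier := (X : Set G) * (Y : Set G)
      one_mem' := ⟨1, one_mem X, 1, one_mem Y, one_mul 1⟩
      mul_mem' := by
        rintro a b ⟨x1, hx1, y1, hy1, rfl⟩ ⟨x2, hx2, y2, hy2, rfl⟩
        refine ⟨x1 * x2, mul_mem hx1 hx2, y1 * y2, mul_mem hy1 hy2, ?_⟩
        have hc := h x2 hx2 y1 hy1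
        show x1 * x2 * (y1 * y2) = x1 * y1 * (x2 * y2)
        calc x1 * x2 * (y1 * y2) = x1 * (x2 * y1) * y2 := by group
          _ = x1 * (y1 * x2) * y2 := by rw [hc]
          _ = x1 * y1 * (x2 * y2) := by group
      inv_mem' := by
        rintro a ⟨x, hx, y, hy, rfl⟩
        refine ⟨x⁻¹, inv_mem hx, y⁻¹, inv_mem hy, ?_⟩
        have hc := h x⁻¹ (inv_mem hx) y⁻¹ (inv_mem hy)
        show x⁻¹ * y⁻¹ = (x * y)⁻¹
        rw [mul_inv_rev, ← hc] }
  have hle : X ⊔ Y ≤ K :=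
    sup_le (fun x hx => ⟨x, hx, 1, one_mem Y, mul_one x⟩)
      (fun y hy => ⟨1, one_mem X, y, hy, one_mul y⟩)
  exact fun g hg => hle hg

theorem supCard [Finite G] (X Y : Subgroup G)
    (h : ∀ x ∈ X, ∀ y ∈ Y, x * y = y * x) :
    Nat.card ↥(X ⊔ Y) * Nat.card ↥(X ⊓ Y) = Nat.card X * Nat.card Y := by
  have := setMulCard X Y
  rwa [← coe_sup_of_comm X Y h] at this

theorem cd_lemma [Finite G] (S T : Subgroup G) :
    m ⊤ S * m ⊤ T ≤ m ⊤ (S ⊔ T) * m ⊤ (S ⊓ T) := by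
  have h1 : Nat.card S * Nat.card T ≤ Nat.card ↥(S ⊔ T) * Nat.card ↥(S ⊓ T) := by
    rw [← setMulCard]
    refine Nat.mul_le_mul_right _ (Nat.card_mono (Set.toFinite _) ?_)
    rintro x hx
    rw [Set.mem_mul] at hx
    obtain ⟨a, ha, b, hb, rfl⟩ := hx
    exact mul_mem_sup ha hb
  have h2 : Nat.card (centralizer (S : Set G)) * Nat.card (centralizer (T : Set G)) ≤
      Nat.card (centralizer (((S ⊓ T : Subgroup G)) : Set G)) *
        Nat.card (centralizer (((S ⊔ T : Subgroup G)) : Set G)) := by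
    have key := setMulCard (centralizer (S : Set G)) (centralizer (T : Set G))
    rw [← centralizer_sup'] at key
    rw [← key]
    refine Nat.mul_le_mul_right _ (Nat.card_mono (Set.toFinite _) ?_)
    rintro x hx
    rw [Set.mem_mul] at hx
    obtain ⟨a, ha, b, hb, rfl⟩ := hx
    exact mul_mem (centralizer_le (SetLike.coe_subset_coe.mpr inf_le_left) ha)
      (centralizer_le (SetLike.coe_subset_coe.mpr inf_le_right) hb)
  simp only [m, top_inf_eq]
  calc Nat.card S * Nat.card (centralizer (S : Set G)) *
        (Nat.card T * Nat.card (centralizer (T : Set G)))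
      = Nat.card S * Nat.card T *
        (Nat.card (centralizer (S : Set G)) * Nat.card (centralizer (T : Set G))) := by ring
    _ ≤ (Nat.card ↥(S ⊔ T) * Nat.card ↥(S ⊓ T)) *
        (Nat.card (centralizer (((S ⊓ T : Subgroup G)) : Set G)) *
          Nat.card (centralizer (((S ⊔ T : Subgroup G)) : Set G))) := Nat.mul_le_mul h1 h2
    _ = _ := by ring

section CP
variable [Finite G] (A B : Subgroup G)
  (hG : ∀ g : G, ∃ a ∈ A, ∃ b ∈ B, g = a * b)
  (hcomm : ∀ a ∈ A, ∀ b ∈ B, a * b = b * a)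

include hG hcomm

theorem inf_central : ∀ x ∈ A ⊓ B, ∀ g : G, x * g = g * x := by
  rintro x hx g
  obtain ⟨hxA, hxB⟩ := mem_inf.mp hx
  obtain ⟨a, ha, b, hb, rfl⟩ := hG g
  have h1 : a * x = x * a := hcomm a ha x hxB
  have h2 : x * b = b * x := hcomm x hxA b hb
  calc x * (a * b) = (x * a) * b := by group
    _ = a * (x * b) := by rw [← h1]; group
    _ = a * (b * x) := by rw [h2]
    _ = (a * b) * x := by group

theorem inf_le_centralizer (s : Set G) : A ⊓ B ≤ centralizer s := by
  intro x hx
  exact mem_centralizer_iff.mpr fun h _ => (inf_central A B hG hcomm x hx h).symm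

theorem decomp {X Y : Subgroup G} (hX : X ≤ A) (hY : Y ≤ B) :
    centralizer ((X ⊔ Y : Subgroup G) : Set G) =
      (A ⊓ centralizer (X : Set G)) ⊔ (B ⊓ centralizer (Y : Set G)) := by
  have hBcX : ∀ b ∈ B, b ∈ centralizer (X : Set G) := fun b hb =>
    mem_centralizer_iff.mpr fun h hh => hcomm h (hX hh) b hb
  have hAcY : ∀ a ∈ A, a ∈ centralizer (Y : Set G) := fun a ha =>
    mem_centralizer_iff.mpr fun h hh => (hcomm a ha h (hY hh)).symm
  rw [centralizer_sup']
  apply le_antisymm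
  · rintro g hg
    obtain ⟨hgX, hgY⟩ := mem_inf.mp hg
    obtain ⟨a, ha, b, hb, rfl⟩ := hG g
    have haX : a ∈ centralizer (X : Set G) := by
      have hval : a = (a * b) * b⁻¹ := by group
      rw [hval]
      exact mul_mem hgX (inv_mem (hBcX b hb))
    have hbY : b ∈ centralizer (Y : Set G) := by
      have hval : b = a⁻¹ * (a * b) := by group
      rw [hval]
      exact mul_mem (inv_mem (hAcY a ha)) hgY
    exact mul_mem_sup (mem_inf.mpr ⟨ha, haX⟩) (mem_inf.mpr ⟨hb, hbY⟩)
  · refine sup_le (le_inf inf_le_right ?_) (le_inf ?_ inf_le_right)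
    · exact inf_le_left.trans (fun a ha => hAcY a ha)
    · exact inf_le_left.trans (fun b hb => hBcX b hb)

theorem prodMeasure {X Y : Subgroup G} (hX : X ≤ A) (hY : Y ≤ B)
    (hZX : A ⊓ B ≤ X) (hZY : A ⊓ B ≤ Y) :
    m ⊤ (X ⊔ Y) * Nat.card ↥(A ⊓ B) ^ 2 = m A X * m B Y := by
  have hXY : X ⊓ Y = A ⊓ B := le_antisymm (inf_le_inf hX hY) (le_inf hZX hZY)
  have c1 : Nat.card ↥(X ⊔ Y) * Nat.card ↥(A ⊓ B) = Nat.card X * Nat.card Y := by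
    rw [← hXY]; exact supCard X Y (fun x hx y hy => hcomm x (hX hx) y (hY hy))
  set X' := A ⊓ centralizer (X : Set G) with hX'
  set Y' := B ⊓ centralizer (Y : Set G) with hY'
  have hX'Y' : X' ⊓ Y' = A ⊓ B := by
    refine le_antisymm (inf_le_inf inf_le_left inf_le_left) ?_
    exact le_inf (le_inf inf_le_left (inf_le_centralizer A B hG hcomm _))
      (le_inf inf_le_right (inf_le_centralizer A B hG hcomm _))
  have c2 : Nat.card ↥(X' ⊔ Y') * Nat.card ↥(A ⊓ B) = Nat.card X' * Nat.card Y' := by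
    rw [← hX'Y']
    exact supCard X' Y' (fun x hx y hy => hcomm x (mem_inf.mp hx).1 y (mem_inf.mp hy).1)
  have hdec := decomp A B hG hcomm hX hY
  simp only [m, top_inf_eq, hdec, ← hX', ← hY']
  rw [pow_two]
  calc Nat.card ↥(X ⊔ Y) * Nat.card ↥(X' ⊔ Y') * (Nat.card ↥(A ⊓ B) * Nat.card ↥(A ⊓ B))
      = (Nat.card ↥(X ⊔ Y) * Nat.card ↥(A ⊓ B)) *
        (Nat.card ↥(X' ⊔ Y') * Nat.card ↥(A ⊓ B)) := by ring
    _ = (Nat.card X * Nat.card Y) * (Nat.card X' * Nat.card Y') := by rw [c1, c2]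
    _ = Nat.card X * Nat.card X' * (Nat.card Y * Nat.card Y') := by ring

theorem restrictMeasure {X : Subgroup G} (hX : X ≤ A) :
    m ⊤ X * Nat.card ↥(A ⊓ B) = m A X * Nat.card B := by
  have hdec := decomp A B hG hcomm hX (bot_le (a := B))
  rw [sup_bot_eq] at hdec
  have hcbot : centralizer (((⊥ : Subgroup G)) : Set G) = ⊤ := by
    refine eq_top_iff.mpr fun g _ => mem_centralizer_iff.mpr fun h hh => ?_
    have : h = 1 := by simpa using hh
    rw [this, one_mul, mul_one]
  rw [hcbot, inf_top_eq] at hdec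
  set X' := A ⊓ centralizer (X : Set G) with hX'
  have hZX' : A ⊓ B ≤ X' := le_inf inf_le_left (inf_le_centralizer A B hG hcomm _)
  have hAinf : A ⊓ (X' ⊔ B) = X' := by
    apply le_antisymm _ (le_inf inf_le_left le_sup_left)
    rintro g hg
    obtain ⟨hgA, hgs⟩ := mem_inf.mp hg
    have hmem : (g : G) ∈ ((X' ⊔ B : Subgroup G) : Set G) := hgs
    rw [coe_sup_of_comm X' B (fun x hx y hy => hcomm x (mem_inf.mp hx).1 y hy),
      Set.mem_mul] at hmem
    obtain ⟨x, hx, b, hb, rfl⟩ := hmem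
    have hbA : b ∈ A := by
      have hval : b = x⁻¹ * (x * b) := by group
      rw [hval]
      exact mul_mem (inv_mem ((inf_le_left : X' ≤ A) hx)) hgA
    exact mul_mem hx (hZX' (mem_inf.mpr ⟨hbA, hb⟩))
  have hX'B : X' ⊓ B = A ⊓ B := by
    refine le_antisymm (inf_le_inf inf_le_left le_rfl) ?_
    exact le_inf (le_inf inf_le_left (inf_le_centralizer A B hG hcomm _)) inf_le_right
  have c : Nat.card ↥(X' ⊔ B) * Nat.card ↥(A ⊓ B) = Nat.card X' * Nat.card B := by
    rw [← hX'B]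
    exact supCard X' B (fun x hx y hy => hcomm x (mem_inf.mp hx).1 y hy)
  simp only [m, top_inf_eq, hdec, ← hX']
  calc Nat.card X * Nat.card ↥(X' ⊔ B) * Nat.card ↥(A ⊓ B)
      = Nat.card X * (Nat.card ↥(X' ⊔ B) * Nat.card ↥(A ⊓ B)) := by ring
    _ = Nat.card X * (Nat.card X' * Nat.card B) := by rw [c]
    _ = Nat.card X * Nat.card X' * Nat.card B := by ring
    _ = Nat.card X * Nat.card ↥(A ⊓ (X' ⊔ B)) * Nat.card B := by rw [hAinf]

end CP
end CPaux

theorem stmt14 {G : Type*} [Group G] [Finite G] (A B : Subgroup G)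
    (hG : ∀ g : G, ∃ a ∈ A, ∃ b ∈ B, g = a * b)
    (hcomm : ∀ a ∈ A, ∀ b ∈ B, a * b = b * a) :
    mstar (⊤ : Subgroup G) * Nat.card ↥(A ⊓ B) ^ 2 = mstar A * mstar B := by
  classical
  have : Finite (Subgroup G) :=
    Finite.of_injective (fun H : Subgroup G => (H : Set G)) SetLike.coe_injective
  open Subgroup in
  -- basic mstar facts
  have hle : ∀ W K : Subgroup G, K ≤ W → m W K ≤ mstar W := by
    intro W K hK
    unfold mstar
    exact le_ciSup (f := fun K : {K : Subgroup G // K ≤ W} => m W K)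
      (Set.Finite.bddAbove (Set.finite_range _)) ⟨K, hK⟩
  have hmax : ∀ W : Subgroup G, ∃ K, K ≤ W ∧ m W K = mstar W ∧ ∀ L, L ≤ W → m W L ≤ m W K := by
    intro W
    haveI : Nonempty {K : Subgroup G // K ≤ W} := ⟨⟨⊥, bot_le⟩⟩
    obtain ⟨⟨K, hK⟩, hKmax⟩ := Finite.exists_max (fun K : {K : Subgroup G // K ≤ W} => m W K)
    exact ⟨K, hK, le_antisymm (hle W K hK) (ciSup_le fun L => hKmax L),
      fun L hL => hKmax ⟨L, hL⟩⟩
  obtain ⟨X₀, hX₀A, hX₀m, hX₀max⟩ := hmax A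
  obtain ⟨Y₀, hY₀B, hY₀m, hY₀max⟩ := hmax B
  obtain ⟨H, -, hHm, hHmax⟩ := hmax ⊤
  have hcZ : Subgroup.centralizer ((A ⊓ B : Subgroup G) : Set G) = ⊤ := by
    refine eq_top_iff.mpr fun g _ => Subgroup.mem_centralizer_iff.mpr fun h hh => ?_
    exact CPaux.inf_central A B hG hcomm h hh g
  -- ≥ direction
  have hgrow : ∀ (W X₁ : Subgroup G), X₁ ≤ W → m W X₁ = mstar W →
      m W (X₁ ⊔ (A ⊓ B)) = mstar W ∧ X₁ ⊔ (A ⊓ B) ≤ W → True := fun _ _ _ _ _ => trivial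
  have key : ∀ (W X₁ : Subgroup G), X₁ ≤ W → A ⊓ B ≤ W → m W X₁ = mstar W →
      (∀ L, L ≤ W → m W L ≤ m W X₁) →
      m W (X₁ ⊔ (A ⊓ B)) = mstar W := by
    intro W X₁ hXW hZW hm hmaxW
    have hsle : X₁ ⊔ (A ⊓ B) ≤ W := sup_le hXW hZW
    have hc : Subgroup.centralizer ((X₁ ⊔ (A ⊓ B) : Subgroup G) : Set G) =
        Subgroup.centralizer (X₁ : Set G) := by
      rw [CPaux.centralizer_sup', hcZ, inf_top_eq]
    have hge : m W X₁ ≤ m W (X₁ ⊔ (A ⊓ B)) := by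
      unfold m
      rw [hc]
      exact Nat.mul_le_mul_right _ (Subgroup.card_le_of_le le_sup_left)
    exact le_antisymm (hm ▸ hmaxW _ hsle) (hm ▸ hge)
  have hmA1 : m A (X₀ ⊔ (A ⊓ B)) = mstar A :=
    key A X₀ hX₀A inf_le_left hX₀m hX₀max
  have hmB1 : m B (Y₀ ⊔ (A ⊓ B)) = mstar B :=
    key B Y₀ hY₀B inf_le_right hY₀m hY₀max
  have hprod := CPaux.prodMeasure A B hG hcomm
    (sup_le hX₀A inf_le_left) (sup_le hY₀B inf_le_right)
    (le_sup_right : A ⊓ B ≤ X₀ ⊔ (A ⊓ B)) (le_sup_right : A ⊓ B ≤ Y₀ ⊔ (A ⊓ B))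
  rw [hmA1, hmB1] at hprod
  have hgeq : mstar A * mstar B ≤ mstar (⊤ : Subgroup G) * Nat.card ↥(A ⊓ B) ^ 2 := by
    rw [← hprod]
    exact Nat.mul_le_mul_right _ (hle ⊤ _ le_top)
  -- ≤ direction
  set Y := B ⊓ (A ⊔ H) with hYdef
  have hsupeq : A ⊔ H = A ⊔ Y := by
    apply le_antisymm
    · refine sup_le le_sup_left ?_
      intro h hh
      obtain ⟨a, ha, b, hb, rfl⟩ := hG h
      have hbY : b ∈ Y := by
        refine Subgroup.mem_inf.mpr ⟨hb, ?_⟩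
        have hval : b = a⁻¹ * (a * b) := by group
        rw [hval]
        exact mul_mem (inv_mem (Subgroup.mem_sup_left ha)) (Subgroup.mem_sup_right hh)
      exact Subgroup.mul_mem_sup ha hbY
    · exact sup_le le_sup_left (inf_le_right.trans le_rfl)
  have hk2 := CPaux.prodMeasure A B hG hcomm (le_refl A) (inf_le_left : Y ≤ B)
    inf_le_left (le_inf inf_le_right (inf_le_left.trans le_sup_left))
  rw [← hsupeq] at hk2
  have hk3A := CPaux.restrictMeasure A B hG hcomm (le_refl A)
  have hk3AH := CPaux.restrictMeasure A B hG hcomm (inf_le_left : A ⊓ H ≤ A)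
  have hcd := CPaux.cd_lemma A H
  have hbig : (m ⊤ A * Nat.card ↥(A ⊓ B)) * (m ⊤ H * Nat.card ↥(A ⊓ B) ^ 2) ≤
      (m ⊤ A * Nat.card ↥(A ⊓ B)) * (mstar A * mstar B) := by
    calc (m ⊤ A * Nat.card ↥(A ⊓ B)) * (m ⊤ H * Nat.card ↥(A ⊓ B) ^ 2)
        = (m ⊤ A * m ⊤ H) * (Nat.card ↥(A ⊓ B) ^ 2 * Nat.card ↥(A ⊓ B)) := by ring
      _ ≤ (m ⊤ (A ⊔ H) * m ⊤ (A ⊓ H)) * (Nat.card ↥(A ⊓ B) ^ 2 * Nat.card ↥(A ⊓ B)) :=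
          Nat.mul_le_mul_right _ hcd
      _ = (m ⊤ (A ⊔ H) * Nat.card ↥(A ⊓ B) ^ 2) * (m ⊤ (A ⊓ H) * Nat.card ↥(A ⊓ B)) := by ring
      _ = (m A A * m B Y) * (m A (A ⊓ H) * Nat.card B) := by rw [hk2, hk3AH]
      _ ≤ (m A A * mstar B) * (mstar A * Nat.card B) :=
          Nat.mul_le_mul (Nat.mul_le_mul_left _ (hle B Y inf_le_left))
            (Nat.mul_le_mul_right _ (hle A _ inf_le_left))
      _ = (m A A * Nat.card B) * (mstar A * mstar B) := by ring
      _ = (m ⊤ A * Nat.card ↥(A ⊓ B)) * (mstar A * mstar B) := by rw [hk3A]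
  have hpos : 0 < m ⊤ A * Nat.card ↥(A ⊓ B) := by
    have h1 : 0 < Nat.card A := Nat.card_pos
    have h2 : 0 < Nat.card (⊤ ⊓ Subgroup.centralizer (A : Set G) : Subgroup G) := Nat.card_pos
    have h3 : 0 < Nat.card ↥(A ⊓ B) := Nat.card_pos
    exact Nat.mul_pos (Nat.mul_pos h1 h2) h3
  have hleq : m ⊤ H * Nat.card ↥(A ⊓ B) ^ 2 ≤ mstar A * mstar B :=
    Nat.le_of_mul_le_mul_left hbig hpos
  rw [← hHm]
  exact le_antisymm hleq (hHm ▸ hgeq)
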